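/- Let x and r_b be real numbers with r_b < x < 0. Set r_a = r_b − x and k = x + Φ⁻(r_a) − Φ⁻(r_b). Then k < 0 and the co-transformation identity Φ⁻(x) = Φ⁻(r_b) + Φ⁻(k) holds. -/

import Mathlib

/-- Φ⁻(x) = log₂(1 − 2^x) -/
noncomputable def Phim (x : ℝ) : ℝ := Real.logb 2 (1 - (2:ℝ) ^ x)

theorem stmt_17 (x rb : ℝ) (hrb : rb < x) (hx : x < 0) :
    x + Phim (rb - x) - Phim rb < 0 ∧
    Phim x = Phim rb + Phim (x + Phim (rb - x) - Phim rb) := by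
  have h2 : (1:ℝ) < 2 := one_lt_two
  have hrb0 : rb < 0 := hrb.trans hx
  have hra : rb - x < 0 := by linarith
  have hx1 : (2:ℝ)^x < 1 := Real.rpow_lt_one_of_one_lt_of_neg h2 hx
  have hb1 : (2:ℝ)^rb < 1 := Real.rpow_lt_one_of_one_lt_of_neg h2 hrb0
  have ha1 : (2:ℝ)^(rb - x) < 1 := Real.rpow_lt_one_of_one_lt_of_neg h2 hra
  have hxpos : (0:ℝ) < (2:ℝ)^x := Real.rpow_pos_of_pos two_pos x
  have hbpos : (0:ℝ) < (2:ℝ)^rb := Real.rpow_pos_of_pos two_pos rb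
  have hbx : (2:ℝ)^rb < (2:ℝ)^x := Real.rpow_lt_rpow_left_iff h2 |>.2 hrb
  have key : ∀ y : ℝ, (2:ℝ)^y < 1 → (2:ℝ)^(Phim y) = 1 - (2:ℝ)^y := by
    intro y hy
    have hypos : (0:ℝ) < (2:ℝ)^y := Real.rpow_pos_of_pos two_pos y
    exact Real.rpow_logb two_pos (by norm_num) (by linarith)
  have hk : (2:ℝ)^(x + Phim (rb - x) - Phim rb)
      = ((2:ℝ)^x - (2:ℝ)^rb) / (1 - (2:ℝ)^rb) := by
    rw [Real.rpow_sub two_pos, Real.rpow_add two_pos, key _ ha1, key _ hb1,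
      Real.rpow_sub two_pos]
    field_simp
  have hk1 : (2:ℝ)^(x + Phim (rb - x) - Phim rb) < 1 := by
    rw [hk, div_lt_one (by linarith)]
    linarith
  have hkpos : (0:ℝ) < (2:ℝ)^(x + Phim (rb - x) - Phim rb) :=
    Real.rpow_pos_of_pos two_pos _
  constructor
  · by_contra h
    push_neg at h
    have h0 : (2:ℝ)^(0:ℝ) ≤ (2:ℝ)^(x + Phim (rb - x) - Phim rb) :=
      (Real.rpow_le_rpow_left_iff h2).2 h
    simp at h0
    linarith
  · simp only [Phim] at hk ⊢
    rw [hk]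
    have h1 : 1 - ((2:ℝ)^x - (2:ℝ)^rb) / (1 - (2:ℝ)^rb)
        = (1 - (2:ℝ)^x) / (1 - (2:ℝ)^rb) := by
      have : (1:ℝ) - (2:ℝ)^rb ≠ 0 := by linarith
      field_simp
      ring
    rw [h1, Real.logb_div (by linarith) (by linarith)]
    ring
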